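/- Let X, Y be Hilbert spaces, A ∈ B(X,Y), and T ⊆ X, S ⊆ Y closed subspaces such that G = A_{T,S}^{(2)} exists. If S' is a closed subspace of Y with δ̂(S,S') < 1/(2 + ‖A‖·‖G‖), then the outer inverse A_{T,S'}^{(2)} exists, equals P_T(I_X + G(P_{S'^⊥} − P_{S^⊥})AP_T)^{-1} G P_{S'^⊥}, and satisfies ‖A_{T,S'}^{(2)}‖ ≤ ‖G‖/(1 − ‖G‖·‖A‖·δ̂(S,S')). -/

import Mathlib

noncomputable section

open ContinuousLinearMap

/-- δ(M,N) = sup{dist(x,N) : x ∈ M, ‖x‖ = 1}, with sSup ∅ = 0 covering M = {0}. -/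
def gapDelta {H : Type*} [NormedAddCommGroup H] (M N : Set H) : ℝ :=
  sSup ((fun x => Metric.infDist x N) '' {x | x ∈ M ∧ ‖x‖ = 1})

/-- The gap δ̂(M,N) = max{δ(M,N), δ(N,M)}. -/
def gapHat {H : Type*} [NormedAddCommGroup H] (M N : Set H) : ℝ :=
  max (gapDelta M N) (gapDelta N M)

/-- Orthogonal projection onto a closed subspace, as an operator H →L[ℂ] H. -/
def projCLM {H : Type*} [NormedAddCommGroup H] [InnerProductSpace ℂ H] [CompleteSpace H]
    (K : Submodule ℂ H) (hK : IsClosed (K : Set H)) : H →L[ℂ] H :=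
  haveI := hK.completeSpace_coe
  K.subtypeL.comp K.orthogonalProjectionOnto

/-- G is the outer inverse A_{T,S}^{(2)}: GAG = G, R(G) = T, N(G) = S. -/
def IsOuterInv {X Y : Type*} [NormedAddCommGroup X] [NormedSpace ℂ X]
    [NormedAddCommGroup Y] [NormedSpace ℂ Y]
    (A : X →L[ℂ] Y) (T : Submodule ℂ X) (S : Submodule ℂ Y) (G : Y →L[ℂ] X) : Prop :=
  G ∘L (A ∘L G) = G ∧ LinearMap.range (G : Y →ₗ[ℂ] X) = T ∧ LinearMap.ker (G : Y →ₗ[ℂ] X) = S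

/-- B is the Moore–Penrose inverse of A. -/
def IsMPInv {X Y : Type*} [NormedAddCommGroup X] [InnerProductSpace ℂ X] [CompleteSpace X]
    [NormedAddCommGroup Y] [InnerProductSpace ℂ Y] [CompleteSpace Y]
    (A : X →L[ℂ] Y) (B : Y →L[ℂ] X) : Prop :=
  A ∘L (B ∘L A) = A ∧ B ∘L (A ∘L B) = B ∧
  adjoint (A ∘L B) = A ∘L B ∧ adjoint (B ∘L A) = B ∘L A

section AuxProj

variable {H : Type*} [NormedAddCommGroup H] [InnerProductSpace ℂ H] [CompleteSpace H]
  {K : Submodule ℂ H}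

theorem projCLM_mem (hK : IsClosed (K : Set H)) (x : H) : projCLM K hK x ∈ K := by
  haveI := hK.completeSpace_coe
  exact (K.orthogonalProjectionOnto x).2

theorem projCLM_eq_self (hK : IsClosed (K : Set H)) {x : H} (hx : x ∈ K) :
    projCLM K hK x = x := by
  haveI := hK.completeSpace_coe
  exact congrArg Subtype.val (Submodule.orthogonalProjectionOnto_mem_subspace_eq_self (⟨x, hx⟩ : K))

theorem norm_projCLM_apply_le (hK : IsClosed (K : Set H)) (x : H) :
    ‖projCLM K hK x‖ ≤ ‖x‖ := by
  haveI := hK.completeSpace_coe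
  calc ‖projCLM K hK x‖ = ‖K.orthogonalProjectionOnto x‖ := rfl
  _ ≤ ‖K.orthogonalProjectionOnto‖ * ‖x‖ := le_opNorm _ _
  _ ≤ 1 * ‖x‖ := by gcongr; exact Submodule.orthogonalProjectionOnto_norm_le K
  _ = ‖x‖ := one_mul _

theorem norm_projCLM_le (hK : IsClosed (K : Set H)) : ‖projCLM K hK‖ ≤ 1 :=
  opNorm_le_bound _ zero_le_one (fun x => by rw [one_mul]; exact norm_projCLM_apply_le hK x)

theorem projCLM_adjoint (hK : IsClosed (K : Set H)) :
    adjoint (projCLM K hK) = projCLM K hK := by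
  haveI := hK.completeSpace_coe
  exact (isSelfAdjoint_starProjection K)

theorem sub_projCLM_mem (hK : IsClosed (K : Set H)) (x : H) : x - projCLM K hK x ∈ Kᗮ := by
  haveI := hK.completeSpace_coe
  exact Submodule.sub_starProjection_mem_orthogonal (K := K) x

theorem projCLM_min (hK : IsClosed (K : Set H)) {x w : H} (hw : w ∈ K) :
    ‖x - projCLM K hK x‖ ≤ ‖x - w‖ := by
  haveI := hK.completeSpace_coe
  have : ‖x - K.starProjection x‖ ≤ ‖x - w‖ := by
    rw [Submodule.starProjection_minimal]
    exact ciInf_le ⟨0, fun b ⟨y, hy⟩ => hy ▸ norm_nonneg _⟩ (⟨w, hw⟩ : K)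
  exact this

theorem projCLM_orthogonal (hK : IsClosed (K : Set H)) :
    projCLM Kᗮ (Submodule.isClosed_orthogonal K) = 1 - projCLM K hK := by
  haveI := hK.completeSpace_coe
  ext x
  have := Submodule.starProjection_orthogonal_val (K := K) x
  exact this

theorem projCLM_zero_iff (hK : IsClosed (K : Set H)) {x : H} :
    projCLM Kᗮ (Submodule.isClosed_orthogonal K) x = 0 ↔ x ∈ K := by
  haveI := hK.completeSpace_coe
  rw [projCLM_orthogonal hK, ContinuousLinearMap.sub_apply, ContinuousLinearMap.one_apply, sub_eq_zero]
  exact ⟨fun h => h ▸ projCLM_mem hK x, fun h => (projCLM_eq_self hK h).symm⟩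

end AuxProj

section AuxGap

variable {H : Type*} [NormedAddCommGroup H] [InnerProductSpace ℂ H] [CompleteSpace H]
  {M N : Submodule ℂ H}

theorem gap_bddAbove (M N : Submodule ℂ H) :
    BddAbove ((fun x => Metric.infDist x (N : Set H)) '' {x | x ∈ (M : Set H) ∧ ‖x‖ = 1}) := by
  refine ⟨1, fun r hr => ?_⟩
  obtain ⟨x, ⟨_, hx1⟩, rfl⟩ := hr
  calc Metric.infDist x (N : Set H) ≤ dist x 0 := Metric.infDist_le_dist_of_mem N.zero_mem
  _ = 1 := by rw [dist_zero_right, hx1]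

theorem gapDelta_nonneg (M N : Submodule ℂ H) : 0 ≤ gapDelta (M : Set H) (N : Set H) :=
  Real.sSup_nonneg (fun r hr => by
    obtain ⟨x, _, rfl⟩ := hr; exact Metric.infDist_nonneg)

theorem infDist_le_gapDelta {x : H} (hx : x ∈ M) (hx1 : ‖x‖ = 1) :
    Metric.infDist x (N : Set H) ≤ gapDelta (M : Set H) (N : Set H) :=
  le_csSup (gap_bddAbove M N) ⟨x, ⟨hx, hx1⟩, rfl⟩

/-- operator norm bound: ‖(1 - P_N) P_M‖ ≤ δ(M, N) -/
theorem norm_one_sub_proj_comp_le (hM : IsClosed (M : Set H)) (hN : IsClosed (N : Set H)) :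
    ‖(1 - projCLM N hN) ∘L projCLM M hM‖ ≤ gapDelta (M : Set H) (N : Set H) := by
  refine opNorm_le_bound _ (gapDelta_nonneg M N) (fun x => ?_)
  rw [ContinuousLinearMap.comp_apply]
  set v := projCLM M hM x with hv
  rcases eq_or_ne v 0 with h0 | h0
  · simp only [h0, map_zero, norm_zero]
    exact mul_nonneg (gapDelta_nonneg M N) (norm_nonneg x)
  · have hvM : v ∈ M := projCLM_mem hM x
    set u : H := ‖v‖⁻¹ • v with hu
    have hun : ‖u‖ = 1 := by
      rw [hu, norm_smul, norm_inv, norm_norm, inv_mul_cancel₀ (norm_ne_zero_iff.2 h0)]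
    have huM : u ∈ M := M.smul_mem _ hvM
    have key : ‖(1 - projCLM N hN) u‖ ≤ Metric.infDist u (N : Set H) := by
      refine le_of_not_gt (fun hlt => ?_)
      obtain ⟨y, hy, hdy⟩ := (Metric.infDist_lt_iff ⟨0, N.zero_mem⟩).1 hlt
      have h3 : ‖u - projCLM N hN u‖ ≤ ‖u - y‖ := projCLM_min hN hy
      rw [dist_eq_norm] at hdy
      have h2 : (1 - projCLM N hN) u = u - projCLM N hN u := by
        simp [ContinuousLinearMap.sub_apply]
      rw [h2] at hlt hdy
      linarith
    have hnorm : ‖(1 - projCLM N hN) v‖ = ‖v‖ * ‖(1 - projCLM N hN) u‖ := by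
      have : v = ‖v‖ • u := by
        rw [hu, smul_smul, mul_inv_cancel₀ (norm_ne_zero_iff.2 h0), one_smul]
      conv_lhs => rw [this]
      rw [ContinuousLinearMap.map_smul_of_tower, norm_smul, norm_norm]
    calc ‖(1 - projCLM N hN) v‖ = ‖v‖ * ‖(1 - projCLM N hN) u‖ := hnorm
    _ ≤ ‖v‖ * gapDelta (M : Set H) (N : Set H) :=
        mul_le_mul_of_nonneg_left (key.trans (infDist_le_gapDelta huM hun)) (norm_nonneg _)
    _ ≤ ‖x‖ * gapDelta (M : Set H) (N : Set H) :=
        mul_le_mul_of_nonneg_right (norm_projCLM_apply_le hM x) (gapDelta_nonneg M N)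
    _ = gapDelta (M : Set H) (N : Set H) * ‖x‖ := mul_comm _ _

theorem norm_proj_comp_one_sub_le (hM : IsClosed (M : Set H)) (hN : IsClosed (N : Set H)) :
    ‖projCLM M hM ∘L (1 - projCLM N hN)‖ ≤ gapDelta (M : Set H) (N : Set H) := by
  have h : projCLM M hM ∘L (1 - projCLM N hN) = adjoint ((1 - projCLM N hN) ∘L projCLM M hM) := by
    have h1 : adjoint (1 : H →L[ℂ] H) = 1 := by rw [← star_eq_adjoint, star_one]
    rw [adjoint_comp, projCLM_adjoint, map_sub, h1, projCLM_adjoint]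
  rw [h, LinearIsometryEquiv.norm_map]
  exact norm_one_sub_proj_comp_le hM hN

theorem norm_proj_sub_proj_le (hM : IsClosed (M : Set H)) (hN : IsClosed (N : Set H)) :
    ‖projCLM M hM - projCLM N hN‖ ≤ gapHat (M : Set H) (N : Set H) := by
  rw [gapHat]
  set δ₁ := gapDelta (M : Set H) (N : Set H)
  set δ₂ := gapDelta (N : Set H) (M : Set H)
  have hδ : 0 ≤ max δ₁ δ₂ := le_max_of_le_left (gapDelta_nonneg M N)
  refine opNorm_le_bound _ hδ (fun x => ?_)
  set P := projCLM M hM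
  set P' := projCLM N hN
  set w : H := x - P' x with hw
  set a : H := P w with ha
  set b : H := P' x - P (P' x) with hb
  have hsplit : (P - P') x = a - b := by
    simp only [ContinuousLinearMap.sub_apply, ha, hb, hw, map_sub]
    abel
  have haM : a ∈ M := projCLM_mem hM w
  have hbM : b ∈ Mᗮ := sub_projCLM_mem hM (P' x)
  have hinner : (inner ℂ a b) = 0 := hbM a haM
  have pyth1 : ‖a - b‖ ^ 2 = ‖a‖ ^ 2 + ‖b‖ ^ 2 := by
    have := norm_sub_sq (𝕜 := ℂ) a b
    rw [hinner] at this
    simpa using this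
  have hwN : w ∈ Nᗮ := sub_projCLM_mem hN x
  have hinner2 : (inner ℂ (P' x) w) = 0 := hwN (P' x) (projCLM_mem hN x)
  have pyth2 : ‖x‖ ^ 2 = ‖P' x‖ ^ 2 + ‖w‖ ^ 2 := by
    have h0 : x = P' x + w := by rw [hw]; abel
    have := norm_add_sq (𝕜 := ℂ) (P' x) w
    rw [hinner2] at this
    rw [← h0] at this
    simpa using this
  have hPw : P' w = 0 := by
    have h1 : w - P' w ∈ Nᗮ := sub_projCLM_mem hN w
    have h2 : P' w ∈ N := projCLM_mem hN w
    have h3 : (inner ℂ (P' w) (P' w)) = 0 := by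
      have h4 : (inner ℂ (P' w) w) = 0 := hwN _ h2
      have h5 : (inner ℂ (P' w) (w - P' w)) = 0 := h1 _ h2
      rw [inner_sub_right, h4] at h5
      linear_combination -h5
    exact inner_self_eq_zero.1 h3
  have hanorm : ‖a‖ ≤ δ₁ * ‖w‖ := by
    have h6 : a = (P ∘L (1 - P')) w := by
      simp [ContinuousLinearMap.comp_apply, ContinuousLinearMap.sub_apply, hPw, ha]
    rw [h6]
    calc ‖(P ∘L (1 - P')) w‖ ≤ ‖P ∘L (1 - P')‖ * ‖w‖ := le_opNorm _ _
    _ ≤ δ₁ * ‖w‖ := mul_le_mul_of_nonneg_right (norm_proj_comp_one_sub_le hM hN) (norm_nonneg _)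
  have hbnorm : ‖b‖ ≤ δ₂ * ‖P' x‖ := by
    have hP'P' : P' (P' x) = P' x := projCLM_eq_self hN (projCLM_mem hN x)
    have h7 : b = ((1 - P) ∘L P') (P' x) := by
      simp [ContinuousLinearMap.comp_apply, ContinuousLinearMap.sub_apply, hP'P', hb]
    rw [h7]
    calc ‖((1 - P) ∘L P') (P' x)‖ ≤ ‖(1 - P) ∘L P'‖ * ‖P' x‖ := le_opNorm _ _
    _ ≤ δ₂ * ‖P' x‖ := mul_le_mul_of_nonneg_right (norm_one_sub_proj_comp_le hN hM) (norm_nonneg _)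
  have hsq : ‖(P - P') x‖ ^ 2 ≤ (max δ₁ δ₂ * ‖x‖) ^ 2 := by
    rw [hsplit, pyth1]
    have h1 : ‖a‖ ^ 2 ≤ (max δ₁ δ₂) ^ 2 * ‖w‖ ^ 2 := by
      have := mul_self_le_mul_self (norm_nonneg a)
        (hanorm.trans (mul_le_mul_of_nonneg_right (le_max_left δ₁ δ₂) (norm_nonneg w)))
      nlinarith [norm_nonneg a, norm_nonneg w]
    have h2 : ‖b‖ ^ 2 ≤ (max δ₁ δ₂) ^ 2 * ‖P' x‖ ^ 2 := by
      have := mul_self_le_mul_self (norm_nonneg b)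
        (hbnorm.trans (mul_le_mul_of_nonneg_right (le_max_right δ₁ δ₂) (norm_nonneg _)))
      nlinarith [norm_nonneg b]
    calc ‖a‖ ^ 2 + ‖b‖ ^ 2 ≤ (max δ₁ δ₂) ^ 2 * (‖w‖ ^ 2 + ‖P' x‖ ^ 2) := by linarith
    _ = (max δ₁ δ₂ * ‖x‖) ^ 2 := by rw [mul_pow]; rw [pyth2]; ring
  nlinarith [norm_nonneg ((P - P') x), mul_nonneg hδ (norm_nonneg x), hsq]

end AuxGap

variable {X Y : Type*} [NormedAddCommGroup X] [InnerProductSpace ℂ X] [CompleteSpace X]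
  [NormedAddCommGroup Y] [InnerProductSpace ℂ Y] [CompleteSpace Y]
set_option maxHeartbeats 2000000 in
theorem stmt_11 (A : X →L[ℂ] Y) (T : Submodule ℂ X) (S S' : Submodule ℂ Y)
    (hT : IsClosed (T : Set X)) (hS : IsClosed (S : Set Y)) (hS' : IsClosed (S' : Set Y))
    (G : Y →L[ℂ] X) (hG : IsOuterInv A T S G)
    (hgap : gapHat (S : Set Y) (S' : Set Y) < 1 / (2 + ‖A‖ * ‖G‖)) :
    ∃ G' : Y →L[ℂ] X, IsOuterInv A T S' G' ∧
      G' = projCLM T hT ∘L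
        (Ring.inverse (1 + G ∘L
            ((projCLM S'ᗮ (Submodule.isClosed_orthogonal S') -
              projCLM Sᗮ (Submodule.isClosed_orthogonal S)) ∘L (A ∘L projCLM T hT))) ∘L
          (G ∘L projCLM S'ᗮ (Submodule.isClosed_orthogonal S'))) ∧
      ‖G'‖ ≤ ‖G‖ / (1 - ‖G‖ * ‖A‖ * gapHat (S : Set Y) (S' : Set Y)) := by
  obtain ⟨hGAG, hran, hker⟩ := hG
  set P := projCLM T hT with hPdef
  set Q' := projCLM S'ᗮ (Submodule.isClosed_orthogonal S') with hQ'def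
  set Q := projCLM Sᗮ (Submodule.isClosed_orthogonal S) with hQdef
  set δ := gapHat (S : Set Y) (S' : Set Y) with hδdef
  have hδ0 : 0 ≤ δ := le_max_of_le_left (gapDelta_nonneg S S')
  have hc0 : (0:ℝ) ≤ ‖A‖ * ‖G‖ := mul_nonneg (norm_nonneg _) (norm_nonneg _)
  have hc2 : (0:ℝ) < 2 + ‖A‖ * ‖G‖ := by linarith
  have hgap2 : δ * (2 + ‖A‖ * ‖G‖) < 1 := by
    rw [lt_div_iff₀ hc2] at hgap
    exact hgap
  have hr1 : ‖G‖ * ‖A‖ * δ < 1 := by nlinarith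
  -- Q' - Q = P_S - P_{S'}
  have hQQ : Q' - Q = projCLM S hS - projCLM S' hS' := by
    rw [hQ'def, hQdef, projCLM_orthogonal hS', projCLM_orthogonal hS]
    abel
  have hQQnorm : ‖Q' - Q‖ ≤ δ := by
    rw [hQQ]
    exact norm_proj_sub_proj_le hS hS'
  set D := G ∘L ((Q' - Q) ∘L (A ∘L P)) with hDdef
  have hDnorm : ‖D‖ ≤ ‖G‖ * ‖A‖ * δ := by
    calc ‖D‖ ≤ ‖G‖ * ‖(Q' - Q) ∘L (A ∘L P)‖ := opNorm_comp_le _ _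
    _ ≤ ‖G‖ * (‖Q' - Q‖ * ‖A ∘L P‖) := by
        gcongr; exact opNorm_comp_le _ _
    _ ≤ ‖G‖ * (δ * ‖A‖) := by
        have hAP : ‖A ∘L P‖ ≤ ‖A‖ := by
          calc ‖A ∘L P‖ ≤ ‖A‖ * ‖P‖ := opNorm_comp_le _ _
          _ ≤ ‖A‖ * 1 := by gcongr; exact norm_projCLM_le hT
          _ = ‖A‖ := mul_one _
        exact mul_le_mul_of_nonneg_left
          (mul_le_mul hQQnorm hAP (norm_nonneg _) hδ0) (norm_nonneg G)
    _ = ‖G‖ * ‖A‖ * δ := by ring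
  have hD1 : ‖D‖ < 1 := lt_of_le_of_lt hDnorm hr1
  have hunit : IsUnit (1 + D) := by
    have := (Units.oneSub (-D) (by rwa [norm_neg])).isUnit
    rwa [Units.val_oneSub, sub_neg_eq_add] at this
  set B := Ring.inverse (1 + D) with hBdef
  have hBl : B * (1 + D) = 1 := Ring.inverse_mul_cancel _ hunit
  have hBr : (1 + D) * B = 1 := Ring.mul_inverse_cancel _ hunit
  -- pointwise facts
  have hPfix : ∀ x ∈ T, P x = x := fun x hx => projCLM_eq_self hT hx
  have hPm : ∀ x, P x ∈ T := projCLM_mem hT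
  have hGT : ∀ y, G y ∈ T := fun y => hran ▸ LinearMap.mem_range_self (G : Y →ₗ[ℂ] X) y
  have hGA : ∀ x ∈ T, G (A x) = x := by
    intro x hx
    rw [← hran] at hx
    obtain ⟨y, rfl⟩ := hx
    have := DFunLike.congr_fun hGAG y
    simpa [ContinuousLinearMap.comp_apply] using this
  have hGQ : ∀ y, G (Q y) = G y := by
    intro y
    have h1 : Q y = y - projCLM S hS y := by
      rw [hQdef, projCLM_orthogonal hS]; simp [ContinuousLinearMap.sub_apply]
    have h2 : G (projCLM S hS y) = 0 := by
      have : projCLM S hS y ∈ LinearMap.ker (G : Y →ₗ[ℂ] X) := by rw [hker]; exact projCLM_mem hS y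
      exact this
    rw [h1, map_sub, h2, sub_zero]
  have hBapply : ∀ z, B z + D (B z) = z := by
    intro z
    have h := DFunLike.congr_fun hBr z
    simpa [ContinuousLinearMap.mul_apply, ContinuousLinearMap.add_apply,
      ContinuousLinearMap.one_apply] using h
  have hB'apply : ∀ z, B (z + D z) = z := by
    intro z
    have h := DFunLike.congr_fun hBl z
    simpa [ContinuousLinearMap.mul_apply, ContinuousLinearMap.add_apply,
      ContinuousLinearMap.one_apply] using h
  have hDmem : ∀ x, D x ∈ T := fun x => by
    rw [hDdef]
    exact hGT _
  have hMmem : ∀ y, B (G (Q' y)) ∈ T := by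
    intro y
    have h1 : B (G (Q' y)) = G (Q' y) - D (B (G (Q' y))) :=
      eq_sub_of_add_eq (hBapply (G (Q' y)))
    rw [h1]
    exact T.sub_mem (hGT _) (hDmem _)
  have hG'y : ∀ y, (P ∘L (B ∘L (G ∘L Q'))) y = B (G (Q' y)) := by
    intro y
    simp only [ContinuousLinearMap.comp_apply]
    exact hPfix _ (hMmem y)
  have hPplusD : ∀ x ∈ T, G (Q' (A x)) = x + D x := by
    intro x hx
    have h1 : D x = G (Q' (A x)) - G (Q (A x)) := by
      rw [hDdef]
      simp only [ContinuousLinearMap.comp_apply, ContinuousLinearMap.sub_apply, map_sub,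
        hPfix x hx]
    rw [hGQ (A x), hGA x hx] at h1
    rw [h1]; abel
  refine ⟨P ∘L (B ∘L (G ∘L Q')), ⟨?_, ?_, ?_⟩, rfl, ?_⟩
  · -- G' A G' = G'
    ext y
    have hm : B (G (Q' y)) ∈ T := hMmem y
    simp only [ContinuousLinearMap.comp_apply]
    rw [hPfix _ (hMmem y)]
    set m := B (G (Q' y)) with hmdef
    rw [hPplusD m hm, hB'apply m, hPfix m hm]
  · -- range = T
    apply le_antisymm
    · rintro x hx
      obtain ⟨y, rfl⟩ := LinearMap.mem_range.1 hx
      exact hPm _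
    · intro x hx
      refine LinearMap.mem_range.2 ⟨A x, ?_⟩
      show (P ∘L (B ∘L (G ∘L Q'))) (A x) = x
      rw [hG'y, hPplusD x hx, hB'apply x]
  · -- ker = S'
    apply le_antisymm
    · intro y hy
      have hy0 : (P ∘L (B ∘L (G ∘L Q'))) y = 0 := LinearMap.mem_ker.1 hy
      rw [hG'y y] at hy0
      have hz : G (Q' y) = 0 := by
        have := hBapply (G (Q' y))
        rw [hy0, map_zero, add_zero] at this
        exact this.symm
      have hQ'S : Q' y ∈ S := by rw [← hker]; exact LinearMap.mem_ker.2 hz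
      have hQ'orth : Q' y ∈ S'ᗮ := projCLM_mem _ y
      have hQ'0 : Q' y = 0 := by
        by_contra hne
        set v := Q' y with hvdef
        set u : Y := ‖v‖⁻¹ • v with hudef
        have hun : ‖u‖ = 1 := by
          rw [hudef, norm_smul, norm_inv, norm_norm, inv_mul_cancel₀ (norm_ne_zero_iff.2 hne)]
        have huS : u ∈ S := S.smul_mem _ hQ'S
        have huorth : u ∈ S'ᗮ := Submodule.smul_mem _ _ hQ'orth
        have hinf : (1:ℝ) ≤ Metric.infDist u (S' : Set Y) := by
          refine le_of_not_gt (fun hlt => ?_)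
          obtain ⟨y', hy', hdy⟩ := (Metric.infDist_lt_iff ⟨0, S'.zero_mem⟩).1 hlt
          rw [dist_eq_norm] at hdy
          have hiz : (inner ℂ u y') = 0 :=
            Submodule.inner_left_of_mem_orthogonal hy' huorth
          have := norm_sub_sq (𝕜 := ℂ) u y'
          rw [hiz, hun] at this
          simp only [map_zero, mul_zero, sub_zero, one_pow] at this
          nlinarith [norm_nonneg y', norm_nonneg (u - y'), sq_nonneg ‖y'‖]
        have hled : Metric.infDist u (S' : Set Y) ≤ gapDelta (S : Set Y) (S' : Set Y) :=
          infDist_le_gapDelta huS hun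
        have hled2 : gapDelta (S : Set Y) (S' : Set Y) ≤ δ := le_max_left _ _
        nlinarith
      exact (projCLM_zero_iff hS').1 hQ'0
    · intro y hy
      have hQy : Q' y = 0 := (projCLM_zero_iff hS').2 hy
      refine LinearMap.mem_ker.2 ?_
      show (P ∘L (B ∘L (G ∘L Q'))) y = 0
      simp only [ContinuousLinearMap.comp_apply, hQy, map_zero]
  · -- norm bound
    have hG'le : ‖P ∘L (B ∘L (G ∘L Q'))‖ ≤ ‖B‖ * ‖G‖ := by
      refine opNorm_le_bound _ (mul_nonneg (norm_nonneg _) (norm_nonneg _)) (fun y => ?_)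
      rw [hG'y y]
      calc ‖B (G (Q' y))‖ ≤ ‖B‖ * ‖G (Q' y)‖ := le_opNorm _ _
      _ ≤ ‖B‖ * (‖G‖ * ‖Q' y‖) := by gcongr; exact le_opNorm _ _
      _ ≤ ‖B‖ * (‖G‖ * ‖y‖) :=
          mul_le_mul_of_nonneg_left
            (mul_le_mul_of_nonneg_left (norm_projCLM_apply_le _ y) (norm_nonneg G))
            (norm_nonneg B)
      _ = ‖B‖ * ‖G‖ * ‖y‖ := by ring
    have hBnorm : ‖B‖ * (1 - ‖D‖) ≤ 1 := by
      have h1 : B = 1 - D * B := by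
        have h := hBr
        rw [add_mul, one_mul] at h
        rw [eq_sub_iff_add_eq]
        exact h
      have h2 : ‖B‖ ≤ 1 + ‖D‖ * ‖B‖ := by
        calc ‖B‖ = ‖1 - D * B‖ := by rw [← h1]
        _ ≤ ‖(1 : X →L[ℂ] X)‖ + ‖D * B‖ := norm_sub_le _ _
        _ ≤ 1 + ‖D‖ * ‖B‖ := by
            gcongr
            · rw [ContinuousLinearMap.one_def]; exact norm_id_le
            · exact norm_mul_le _ _
      nlinarith [norm_nonneg B]
    have h1r : 0 < 1 - ‖G‖ * ‖A‖ * δ := by linarith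
    rw [le_div_iff₀ h1r]
    have hBD : ‖B‖ * (1 - ‖G‖ * ‖A‖ * δ) ≤ 1 := by
      nlinarith [norm_nonneg B]
    nlinarith [norm_nonneg (P ∘L (B ∘L (G ∘L Q'))), norm_nonneg B, norm_nonneg G,
      mul_nonneg (norm_nonneg B) (norm_nonneg G)]
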